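/- arXiv:1803.05284 — 3 statements merged into one kernel-verified Lean document; each statement's English description precedes it below -/
import Mathlib

section
/- With p₁, p₂, … i.i.d. from the mixture π₀·Uniform(0,1) + (1−π₀)·F_{p*} and η ∈ (0,1), the quantile estimator π̃₀^{(m)} = min(1, (Σ_{i=1}^m 1{pᵢ ≥ η}) / (m(1−η))) satisfies liminf_{m→∞} π̃₀^{(m)} ≥ π₀ almost surely; i.e., the estimator is an asymptotic upper bound for the true null proportion π₀. -/
open MeasureTheory ProbabilityTheory Filter Topology

/-- With `p₁, p₂, …` i.i.d. from the mixture
`π₀·Uniform(0,1) + (1−π₀)·F_{p*}` and `η ∈ (0,1)`, the quantile estimator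
`π̃₀^{(m)} = min(1, (Σ_{i<m} 1{pᵢ ≥ η}) / (m(1−η)))` satisfies
`liminf_{m→∞} π̃₀^{(m)} ≥ π₀` almost surely. -/
theorem quantile_estimator_asymptotic_upper_bound
    {Ω : Type*} [MeasureSpace Ω] [IsProbabilityMeasure (ℙ : Measure Ω)]
    (p : ℕ → Ω → ℝ) (hmeas : ∀ i, Measurable (p i))
    (π₀ : ℝ) (hπ : π₀ ∈ Set.Icc (0:ℝ) 1)
    (ν : Measure ℝ) [IsProbabilityMeasure ν] (hνsupp : ν (Set.Icc (0:ℝ) 1) = 1)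
    (hindep : iIndepFun p ℙ)
    (hlaw : ∀ i, Measure.map (p i) ℙ
        = ENNReal.ofReal π₀ • ((volume : Measure ℝ).restrict (Set.Icc 0 1))
          + ENNReal.ofReal (1 - π₀) • ν)
    (η : ℝ) (hη : η ∈ Set.Ioo (0:ℝ) 1) :
    ∀ᵐ ω ∂(ℙ : Measure Ω), π₀ ≤ Filter.liminf
      (fun m : ℕ =>
        min 1 ((∑ i ∈ Finset.range m, if η ≤ p i ω then (1:ℝ) else 0) / (m * (1 - η))))
      atTop := by
  obtain ⟨hη0, hη1⟩ := hη
  obtain ⟨hπ0, hπ1⟩ := hπ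
  set f : ℝ → ℝ := (Set.Ici η).indicator (fun _ => (1:ℝ)) with hf_def
  have hf : Measurable f := measurable_const.indicator measurableSet_Ici
  set X : ℕ → Ω → ℝ := fun i ω => f (p i ω) with hX_def
  have hXmeas : ∀ i, Measurable (X i) := fun i => hf.comp (hmeas i)
  have hXint : Integrable (X 0) ℙ := by
    refine Integrable.mono' (integrable_const (1:ℝ)) (hXmeas 0).aestronglyMeasurable ?_
    filter_upwards with ω
    simp only [hX_def, hf_def, Set.indicator]
    split <;> simp
  have hXindep : Pairwise (Function.onFun (IndepFun · · ℙ) X) := by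
    intro i j hij
    exact (hindep.comp (fun _ => f) (fun _ => hf)).indepFun hij
  have hXident : ∀ i, IdentDistrib (X i) (X 0) ℙ ℙ := by
    intro i
    refine ⟨(hXmeas i).aemeasurable, (hXmeas 0).aemeasurable, ?_⟩
    rw [show X i = f ∘ (p i) from rfl, show X 0 = f ∘ (p 0) from rfl,
      ← Measure.map_map hf (hmeas i), ← Measure.map_map hf (hmeas 0), hlaw i, hlaw 0]
  -- expectation
  have hmap_prob : IsProbabilityMeasure (Measure.map (p 0) ℙ) :=
    Measure.isProbabilityMeasure_map (hmeas 0).aemeasurable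
  have hE : 𝔼[X 0] = ((Measure.map (p 0) ℙ) (Set.Ici η)).toReal := by
    show (∫ ω, f (p 0 ω)) = _
    rw [← integral_map (hmeas 0).aemeasurable hf.aestronglyMeasurable]
    simp [hf_def, integral_indicator_const, measurableSet_Ici, measureReal_def]
  have hμIci : ENNReal.ofReal (π₀ * (1 - η)) ≤ (Measure.map (p 0) ℙ) (Set.Ici η) := by
    rw [hlaw 0]
    have h1 : ((volume : Measure ℝ).restrict (Set.Icc 0 1)) (Set.Ici η)
        = ENNReal.ofReal (1 - η) := by
      rw [Measure.restrict_apply measurableSet_Ici]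
      have : Set.Ici η ∩ Set.Icc (0:ℝ) 1 = Set.Icc η 1 := by
        ext x
        simp only [Set.mem_inter_iff, Set.mem_Ici, Set.mem_Icc]
        constructor
        · rintro ⟨h, _, h2⟩; exact ⟨h, h2⟩
        · rintro ⟨h1', h2⟩; exact ⟨h1', le_trans hη0.le h1', h2⟩
      rw [this, Real.volume_Icc]
    simp only [Measure.add_apply, Measure.smul_apply, smul_eq_mul, h1]
    calc ENNReal.ofReal (π₀ * (1 - η)) = ENNReal.ofReal π₀ * ENNReal.ofReal (1 - η) := by
          rw [ENNReal.ofReal_mul hπ0]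
      _ ≤ _ := le_add_of_nonneg_right zero_le
  have hEge : π₀ * (1 - η) ≤ 𝔼[X 0] := by
    rw [hE]
    exact (ENNReal.ofReal_le_iff_le_toReal (measure_ne_top _ _)).mp hμIci
  have hEdiv : π₀ ≤ 𝔼[X 0] / (1 - η) := by
    rw [le_div_iff₀ (by linarith)]
    linarith
  -- SLLN
  filter_upwards [strong_law_ae_real X hXint hXindep hXident] with ω hω
  have hsum : ∀ m : ℕ, (∑ i ∈ Finset.range m, if η ≤ p i ω then (1:ℝ) else 0)
      = ∑ i ∈ Finset.range m, X i ω := by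
    intro m
    refine Finset.sum_congr rfl fun i _ => ?_
    simp [hX_def, hf_def, Set.indicator, Set.mem_Ici]
  have htend : Tendsto (fun m : ℕ =>
      min 1 ((∑ i ∈ Finset.range m, if η ≤ p i ω then (1:ℝ) else 0) / (m * (1 - η))))
      atTop (𝓝 (min 1 (𝔼[X 0] / (1 - η)))) := by
    apply Tendsto.min tendsto_const_nhds
    have : (fun m : ℕ =>
        (∑ i ∈ Finset.range m, if η ≤ p i ω then (1:ℝ) else 0) / (m * (1 - η)))
        = fun m : ℕ => ((∑ i ∈ Finset.range m, X i ω) / m) / (1 - η) := by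
      funext m
      rw [hsum m, div_div]
    rw [this]
    exact hω.div_const _
  rw [htend.liminf_eq]
  exact le_min hπ1 hEdiv
end

section
/- (Proposition 1 core identity) In the K-group non-exchangeable model, for each test k in group d, E[ u_k* · 1{wlr_k* ≥ t} | d ] = π_{d,0} · (1 − F_{d,wlr*}(t)), where u_k* is the posterior null probability, wlr*(z; d) = ((1−π_{d,0})/π_{d,0}) · f_{d,1}(z)/f_{d,0}(z) is the weighted likelihood ratio, and F_{d,wlr*} is the null-conditional CDF of wlr* in group d. -/
open MeasureTheory

/-- Proposition 1 core identity: In one group of the non-exchangeable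
model with null proportion `π`, null/alternative densities `f₀, f₁`, weighted likelihood
ratio `wlr(z) = ((1−π)/π)·f₁(z)/f₀(z)` and posterior null probability
`u*(z) = 1/(1+wlr(z))`, for any threshold `t`:
`E[u*(Z)·1{wlr(Z) ≥ t}] = π·(1 − F_{wlr}(t))`, where the expectation is against the
marginal density `f_c = π f₀ + (1−π) f₁` and `1 − F_{wlr}(t)` is the null probability
of `{wlr ≥ t}`. -/
theorem prop1_core_identity
    (π : ℝ) (hπ : π ∈ Set.Ioo (0:ℝ) 1)
    (f₀ f₁ : ℝ → ℝ) (hf₀ : ∀ z, 0 < f₀ z) (hf₁ : ∀ z, 0 ≤ f₁ z)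
    (hm₀ : Measurable f₀) (hm₁ : Measurable f₁)
    (wlr u fc : ℝ → ℝ)
    (hwlr : ∀ z, wlr z = (1 - π) / π * (f₁ z / f₀ z))
    (hu : ∀ z, u z = 1 / (1 + wlr z))
    (hfc : ∀ z, fc z = π * f₀ z + (1 - π) * f₁ z)
    (t : ℝ) :
    ∫ z in {z' | t ≤ wlr z'}, u z * fc z = π * ∫ z in {z' | t ≤ wlr z'}, f₀ z := by
  obtain ⟨hπ0, hπ1⟩ := hπ
  have key : ∀ z, u z * fc z = π * f₀ z := by
    intro z
    have h0 := hf₀ z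
    have h1 := hf₁ z
    have hπ0' : π ≠ 0 := ne_of_gt hπ0
    have h0' : f₀ z ≠ 0 := ne_of_gt h0
    have hD : 0 < π * f₀ z + (1 - π) * f₁ z :=
      add_pos_of_pos_of_nonneg (mul_pos hπ0 h0) (mul_nonneg (by linarith) h1)
    have h1w : 1 + wlr z = (π * f₀ z + (1 - π) * f₁ z) / (π * f₀ z) := by
      rw [hwlr]; field_simp
    rw [hu, hfc, h1w, one_div, inv_div, div_mul_eq_mul_div, mul_div_assoc,
      div_self (ne_of_gt hD), mul_one]
  calc ∫ z in {z' | t ≤ wlr z'}, u z * fc z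
      = ∫ z in {z' | t ≤ wlr z'}, π * f₀ z := by
        exact integral_congr_ae (Filter.Eventually.of_forall fun z => key z)
    _ = π * ∫ z in {z' | t ≤ wlr z'}, f₀ z := MeasureTheory.integral_const_mul π f₀
end

section
/- In the two-groups model, the decision rule δᵢ = 1{uᵢ ≤ t} thresholding posterior null probabilities minimizes the posterior expected number of false negatives E[Σᵢ(1−δᵢ)γᵢ | z] among all deterministic rules δ ∈ {0,1}^m satisfying the posterior-FDR constraint (Σᵢ uᵢδᵢ)/max(1, Σᵢ δᵢ) ≤ α, whenever (Σ_{uᵢ ≤ t} uᵢ)/max(1, #{i: uᵢ ≤ t}) ≤ α and t is chosen maximal with this property: no rule rejecting strictly more hypotheses satisfies the constraint, and among rules rejecting the same number, the threshold rule has minimal posterior expected false negatives. -/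
/-- Number of rejections of a deterministic decision rule `δ`. -/
def nReject {m : ℕ} (δ : Fin m → Bool) : ℝ := ∑ i, if δ i then (1:ℝ) else 0

/-- Bayesian (posterior) FDR of a decision rule `δ`:
`(Σᵢ uᵢ δᵢ)/max(1, Σᵢ δᵢ)`. -/
noncomputable def bfdrOf {m : ℕ} (u : Fin m → ℝ) (δ : Fin m → Bool) : ℝ :=
  (∑ i, if δ i then u i else 0) / max 1 (nReject δ)

/-- Posterior expected number of false negatives of `δ`:
`E[Σᵢ (1−δᵢ) γᵢ | z] = Σᵢ (1−δᵢ)(1−uᵢ)`. -/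
noncomputable def efnOf {m : ℕ} (u : Fin m → ℝ) (δ : Fin m → Bool) : ℝ :=
  ∑ i, if δ i then 0 else (1 - u i)

open Finset

private lemma split_sum' {m : ℕ} (f : Fin m → ℝ) (S T : Finset (Fin m)) :
    ∑ i ∈ S, f i = ∑ i ∈ S \ T, f i + ∑ i ∈ S ∩ T, f i := by
  rw [← Finset.sum_union (Finset.disjoint_sdiff_inter S T), Finset.sdiff_union_inter]

/-- Key comparison: the threshold set `S = {i : u i ≤ t}` maximizes `∑ (1 - u i)`
among all sets of no larger cardinality. -/
private lemma key_sum_le' {m : ℕ} (u : Fin m → ℝ) (h01 : ∀ i, u i ∈ Set.Icc (0:ℝ) 1)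
    (t : ℝ) (S T : Finset (Fin m)) (hS : ∀ i, i ∈ S ↔ u i ≤ t)
    (hcard : T.card ≤ S.card) :
    ∑ i ∈ T, (1 - u i) ≤ ∑ i ∈ S, (1 - u i) := by
  rw [split_sum' (fun i => 1 - u i) S T, split_sum' (fun i => 1 - u i) T S,
    Finset.inter_comm T S]
  have hk : (T \ S).card ≤ (S \ T).card := by
    have h1 := Finset.card_sdiff_add_card_inter T S
    have h2 := Finset.card_sdiff_add_card_inter S T
    rw [Finset.inter_comm T S] at h1
    omega
  have hTS : ∑ i ∈ T \ S, (1 - u i) ≤ ((T \ S).card : ℝ) * (1 - t) := by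
    calc ∑ i ∈ T \ S, (1 - u i) ≤ ∑ _i ∈ T \ S, (1 - t) := by
          apply Finset.sum_le_sum
          intro i hi
          have : ¬ u i ≤ t := fun h => (Finset.mem_sdiff.mp hi).2 ((hS i).mpr h)
          linarith [not_le.mp this]
      _ = ((T \ S).card : ℝ) * (1 - t) := by rw [Finset.sum_const, nsmul_eq_mul]
  have hST : ((T \ S).card : ℝ) * (1 - t) ≤ ∑ i ∈ S \ T, (1 - u i) := by
    rcases le_or_gt (1 - t) 0 with h | h
    · have : (0:ℝ) ≤ ∑ i ∈ S \ T, (1 - u i) :=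
        Finset.sum_nonneg fun i _ => by linarith [(h01 i).2]
      nlinarith [Nat.cast_nonneg (T \ S).card (α := ℝ)]
    · calc ((T \ S).card : ℝ) * (1 - t) ≤ ((S \ T).card : ℝ) * (1 - t) := by
            apply mul_le_mul_of_nonneg_right _ h.le
            exact_mod_cast hk
        _ = ∑ _i ∈ S \ T, (1 - t) := by rw [Finset.sum_const, nsmul_eq_mul]
        _ ≤ ∑ i ∈ S \ T, (1 - u i) := by
            apply Finset.sum_le_sum
            intro i hi
            have := (hS i).mp (Finset.mem_sdiff.mp hi).1
            linarith
  linarith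

private lemma nReject_eq_card' {m : ℕ} (δ : Fin m → Bool) :
    nReject δ = ((univ.filter (fun i => δ i = true)).card : ℝ) := by
  unfold nReject; rw [Finset.sum_boole]

private lemma efn_eq' {m : ℕ} (u : Fin m → ℝ) (δ : Fin m → Bool) :
    efnOf u δ = (∑ i, (1 - u i)) -
      ∑ i ∈ univ.filter (fun i => δ i = true), (1 - u i) := by
  unfold efnOf
  rw [Finset.sum_filter, ← Finset.sum_sub_distrib]
  apply Finset.sum_congr rfl
  intro i _
  by_cases h : δ i = true <;> simp [h]

/-- In the two-groups model, the threshold rule `δᵢ = 1{uᵢ ≤ t}` on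
posterior null probabilities minimizes the posterior expected number of false negatives
among all deterministic rules satisfying the posterior-FDR constraint `BFDR(δ) ≤ α`,
whenever the threshold rule itself satisfies the constraint and `t` is maximal in the
sense that no rule rejecting strictly more hypotheses satisfies the constraint; moreover,
among rules rejecting the same number of hypotheses, the threshold rule has minimal
posterior expected false negatives. -/
theorem threshold_rule_optimal {m : ℕ} (u : Fin m → ℝ)
    (h01 : ∀ i, u i ∈ Set.Icc (0:ℝ) 1)
    (t α : ℝ) (δt : Fin m → Bool) (hδt : ∀ i, δt i = true ↔ u i ≤ t)
    (hcon : bfdrOf u δt ≤ α)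
    (hmax : ∀ δ : Fin m → Bool, nReject δt < nReject δ → ¬ bfdrOf u δ ≤ α) :
    (∀ δ : Fin m → Bool, bfdrOf u δ ≤ α → efnOf u δt ≤ efnOf u δ) ∧
      (∀ δ : Fin m → Bool, nReject δ = nReject δt → efnOf u δt ≤ efnOf u δ) := by
  set S := univ.filter (fun i => δt i = true) with hSdef
  have hSiff : ∀ i, i ∈ S ↔ u i ≤ t := by
    intro i; simp [hSdef, hδt i]
  have main : ∀ δ : Fin m → Bool, nReject δ ≤ nReject δt → efnOf u δt ≤ efnOf u δ := by
    intro δ hle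
    set T := univ.filter (fun i => δ i = true) with hTdef
    rw [nReject_eq_card', nReject_eq_card'] at hle
    have hcard : T.card ≤ S.card := by exact_mod_cast hle
    rw [efn_eq', efn_eq']
    have := key_sum_le' u h01 t S T hSiff hcard
    linarith
  constructor
  · intro δ hα
    exact main δ (le_of_not_gt fun h => hmax δ h hα)
  · intro δ heq
    exact main δ heq.le
end
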